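/- Suppose char(k) = 0. Then k((F)) is a Hahn field in k((G)) (a subfield containing all monomials αt^g) if and only if F satisfies (S1) all singletons {g} ∈ F, (S2) closure under subsets, (S3) closure under finite unions, (A2) closure under sumsets, and (A4) closure under finite-sum closures of subsets of G^{≥0}. In particular, every Hahn field of the form k((F)) with char(k) = 0 is truncation closed. -/

import Mathlib

open scoped Pointwise

noncomputable section

namespace KHullAux

open HahnSeries

variable {G : Type*} [AddCommGroup G] [LinearOrder G] [IsOrderedAddMonoid G]

/-- Indicator Hahn series with coefficient `1` on `A`. -/
def ind (k : Type*) [Zero k] [One k] (A : Set G) (h : A.IsPWO) : HahnSeries G k :=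
  ⟨A.indicator 1, h.mono Set.support_indicator_subset⟩

variable {k : Type*} [Field k]

lemma ind_coeff_of_mem {A : Set G} (h : A.IsPWO) {g : G} (hg : g ∈ A) :
    (ind k A h).coeff g = 1 := Set.indicator_of_mem hg 1

lemma ind_coeff_of_not_mem {A : Set G} (h : A.IsPWO) {g : G} (hg : g ∉ A) :
    (ind k A h).coeff g = 0 := Set.indicator_of_notMem hg 1

lemma ind_coeff_nonneg {A : Set G} (h : A.IsPWO) (g : G) : 0 ≤ (ind ℚ A h).coeff g := by
  by_cases hg : g ∈ A
  · rw [ind_coeff_of_mem h hg]; norm_num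
  · rw [ind_coeff_of_not_mem h hg]

lemma support_ind (A : Set G) (h : A.IsPWO) : (ind k A h).support = A := by
  ext g
  by_cases hg : g ∈ A
  · simp [HahnSeries.mem_support, ind_coeff_of_mem h hg, hg]
  · simp [HahnSeries.mem_support, ind_coeff_of_not_mem h hg, hg]

lemma support_ind_add_ind [CharZero k] {A B : Set G} (hA : A.IsPWO) (hB : B.IsPWO) :
    (ind k A hA + ind k B hB).support = A ∪ B := by
  ext g
  by_cases hgA : g ∈ A <;> by_cases hgB : g ∈ B <;>
      simp only [HahnSeries.mem_support, HahnSeries.coeff_add, Set.mem_union,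
        ind_coeff_of_mem, ind_coeff_of_not_mem, hgA, hgB, not_false_iff, or_self, iff_true,
        or_true, true_or, add_zero, zero_add] <;>
    norm_num [hgA, hgB]

lemma support_pow_subset {R : Type*} [CommRing R] [Nontrivial R] (u : HahnSeries G R) (n : ℕ) :
    (u ^ n).support ⊆ (AddSubmonoid.closure u.support : Set G) := by
  induction' n with n ih <;> intro g hn
  · simp only [pow_zero, support_one, Set.mem_singleton_iff] at hn
    rw [hn, SetLike.mem_coe]
    exact AddSubmonoid.zero_mem _
  · rw [pow_succ] at hn
    obtain ⟨i, hi, j, hj, rfl⟩ := support_mul_subset hn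
    exact SetLike.mem_coe.2 (AddSubmonoid.add_mem _ (ih hi) (AddSubmonoid.subset_closure hj))

lemma coeff_pow_nonneg (u : HahnSeries G ℚ) (hu : ∀ g, 0 ≤ u.coeff g) (n : ℕ) (g : G) :
    0 ≤ (u ^ n).coeff g := by
  induction' n with n ih generalizing g
  · rw [pow_zero]
    rw [HahnSeries.coeff_one]
    split <;> norm_num
  · rw [pow_succ, HahnSeries.coeff_mul]
    exact Finset.sum_nonneg fun ij _ => mul_nonneg (ih _) (hu _)

lemma coeff_pow_pos (u : HahnSeries G ℚ) (hu : ∀ g, 0 ≤ u.coeff g) {g : G}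
    (hg : g ∈ AddSubmonoid.closure (u.support)) : ∃ n, 0 < (u ^ n).coeff g := by
  induction hg using AddSubmonoid.closure_induction with
  | mem x hx =>
      exact ⟨1, by rw [pow_one]; exact lt_of_le_of_ne (hu x) (Ne.symm hx)⟩
  | zero => exact ⟨0, by rw [pow_zero, HahnSeries.coeff_one, if_pos rfl]; norm_num⟩
  | add x y hx hy ihx ihy =>
      obtain ⟨m, hm⟩ := ihx
      obtain ⟨n, hn⟩ := ihy
      refine ⟨m + n, ?_⟩
      rw [_root_.pow_add, HahnSeries.coeff_mul]
      refine Finset.sum_pos' (fun ij _ => mul_nonneg (coeff_pow_nonneg u hu _ _)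
        (coeff_pow_nonneg u hu _ _)) ⟨(x, y), ?_, mul_pos hm hn⟩
      rw [Finset.mem_addAntidiagonal]
      exact ⟨hm.ne', hn.ne', rfl⟩

lemma orderTop_ind_pos {A : Set G} (hA : A.IsPWO) (hpos : ∀ g ∈ A, 0 < g) :
    0 < (ind k A hA).orderTop := by
  rcases eq_or_ne (ind k A hA) 0 with h0 | h0
  · rw [h0, orderTop_zero]; exact WithTop.coe_lt_top 0
  · rw [orderTop_of_ne_zero h0, WithTop.coe_pos]
    have hm := (ind k A hA).isWF_support.min_mem (support_nonempty_iff.2 h0)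
    have hsub : (ind k A hA).support ⊆ A := by rw [support_ind]
    exact hpos _ (hsub hm)

/-- Geometric series over `ℚ`. -/
lemma geomQ (A : Set G) (hA : A.IsPWO) (hpos : ∀ g ∈ A, 0 < g) :
    ∃ w : HahnSeries G ℚ, (1 - ind ℚ A hA) * w = 1 ∧
      w.support = (AddSubmonoid.closure A : Set G) := by
  set u := ind ℚ A hA with hu
  have hiu : 0 < u.orderTop := orderTop_ind_pos hA hpos
  refine ⟨(SummableFamily.powers u).hsum,
    SummableFamily.one_sub_self_mul_hsum_powers hiu, ?_⟩
  have hsupp : ∀ n : ℕ, ((SummableFamily.powers u) n) = u ^ n := fun n =>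
    congrFun (SummableFamily.coe_powers hiu) n
  have hAeq : u.support = A := support_ind A hA
  apply Set.Subset.antisymm
  · intro g hg
    obtain ⟨n, hn⟩ := Set.mem_iUnion.1 (SummableFamily.support_hsum_subset hg)
    rw [hsupp n] at hn
    have := support_pow_subset u n hn
    rwa [hAeq] at this
  · intro g hg
    rw [← hAeq] at hg
    obtain ⟨n0, hn0⟩ := coeff_pow_pos u (ind_coeff_nonneg hA) hg
    have hfin := (SummableFamily.powers u).finite_co_support g
    rw [HahnSeries.mem_support, SummableFamily.coeff_hsum,
      finsum_eq_sum (fun i => ((SummableFamily.powers u) i).coeff g) hfin]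
    apply ne_of_gt
    apply Finset.sum_pos'
    · intro i _
      rw [hsupp i]
      exact coeff_pow_nonneg u (ind_coeff_nonneg hA) i g
    · refine ⟨n0, ?_, ?_⟩
      · rw [Set.Finite.mem_toFinset (hs := hfin)]
        show ((SummableFamily.powers u) n0).coeff g ≠ 0
        rw [hsupp n0]
        exact hn0.ne'
      · rw [hsupp n0]; exact hn0

variable [CharZero k]

/-- Geometric series over any field of characteristic zero. -/
lemma geomK (A : Set G) (hA : A.IsPWO) (hpos : ∀ g ∈ A, 0 < g) :
    ∃ w : HahnSeries G k, (1 - ind k A hA) * w = 1 ∧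
      w.support = (AddSubmonoid.closure A : Set G) := by
  obtain ⟨w, hw1, hw2⟩ := geomQ A hA hpos
  set f : ℚ →ₙ+* k := (Rat.castHom k).toNonUnitalRingHom with hf
  refine ⟨w.map f, ?_, ?_⟩
  · have hmap := congrArg (fun x : HahnSeries G ℚ => x.map f) hw1
    rw [HahnSeries.map_mul f] at hmap
    have h1 : ((1 : HahnSeries G ℚ).map f : HahnSeries G k) = 1 := by
      ext g
      simp only [HahnSeries.map_coeff, HahnSeries.coeff_one]
      split
      · exact Rat.cast_one
      · exact Rat.cast_zero
    have hind : (((1 - ind ℚ A hA) : HahnSeries G ℚ).map f : HahnSeries G k)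
        = 1 - ind k A hA := by
      ext g
      rw [HahnSeries.map_coeff, HahnSeries.coeff_sub, HahnSeries.coeff_sub, map_sub]
      congr 1
      · rw [HahnSeries.coeff_one, HahnSeries.coeff_one]
        split
        · exact Rat.cast_one
        · exact Rat.cast_zero
      · by_cases hg : g ∈ A
        · rw [ind_coeff_of_mem hA hg, ind_coeff_of_mem hA hg]; exact Rat.cast_one
        · rw [ind_coeff_of_not_mem hA hg, ind_coeff_of_not_mem hA hg]; exact Rat.cast_zero
    rw [h1, hind] at hmap
    exact hmap
  · have : (w.map f : HahnSeries G k).support = w.support := by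
      ext g
      simp only [HahnSeries.mem_support, HahnSeries.map_coeff, hf]
      constructor
      · intro h hc; apply h; rw [hc]; simp
      · intro h hc
        exact h (Rat.cast_injective (α := k) (by rw [Rat.cast_zero]; exact hc))
    rw [this, hw2]

omit [CharZero k] in
lemma support_single_mul (g : G) {r : k} (hr : r ≠ 0) (x : HahnSeries G k) :
    (HahnSeries.single g r * x).support = {g} + x.support := by
  ext c
  constructor
  · intro hc
    obtain ⟨i, hi, j, hj, rfl⟩ := support_mul_subset hc
    have : i = g := support_single_subset hi
    exact Set.add_mem_add (by rw [this]; exact rfl) hj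
  · rintro ⟨i, hi, j, hj, rfl⟩
    rw [Set.mem_singleton_iff] at hi
    subst hi
    show (HahnSeries.single i r * x).coeff (i + j) ≠ 0
    rw [add_comm, HahnSeries.coeff_single_mul_add]
    exact mul_ne_zero hr hj

end KHullAux

end

/-- Suppose `char k = 0`. Then `k((F))` is a Hahn field in `k((G))` (a
subfield containing all monomials `α t^g`) if and only if `F` satisfies (S1) all singletons
`{g} ∈ F`, (S2) closure under subsets, (S3) closure under finite unions, (A2) closure under
sumsets, and (A4) closure under finite-sum closures of members contained in `G^{≥0}`.
In particular, every Hahn field of the form `k((F))` with `char k = 0` is truncation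
closed: if `A ∈ F` and `B` is an initial segment of `A` then `B ∈ F`. -/
theorem khull_hahnField_iff_charZero
    {G : Type*} [AddCommGroup G] [LinearOrder G] [IsOrderedAddMonoid G] {k : Type*} [Field k] [CharZero k]
    (F : Set (Set G)) (hWF : ∀ A ∈ F, A.IsWF) :
    ((∃ K : Subfield (HahnSeries G k),
        (K : Set (HahnSeries G k)) = {a : HahnSeries G k | a.support ∈ F} ∧
        ∀ (α : k) (g : G), HahnSeries.single g α ∈ K) ↔
      ((∀ g : G, ({g} : Set G) ∈ F) ∧
       (∀ A ∈ F, ∀ B ⊆ A, B ∈ F) ∧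
       (∀ A ∈ F, ∀ B ∈ F, A ∪ B ∈ F) ∧
       (∀ A ∈ F, ∀ B ∈ F, A + B ∈ F) ∧
       (∀ A ∈ F, A ⊆ {g : G | 0 ≤ g} → (AddSubmonoid.closure A : Set G) ∈ F))) ∧
    ((∃ K : Subfield (HahnSeries G k),
        (K : Set (HahnSeries G k)) = {a : HahnSeries G k | a.support ∈ F} ∧
        ∀ (α : k) (g : G), HahnSeries.single g α ∈ K) →
      ∀ A ∈ F, ∀ B ⊆ A, (∀ b ∈ B, ∀ x ∈ A, x ≤ b → x ∈ B) → B ∈ F) := by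
  have main : (∃ K : Subfield (HahnSeries G k),
        (K : Set (HahnSeries G k)) = {a : HahnSeries G k | a.support ∈ F} ∧
        ∀ (α : k) (g : G), HahnSeries.single g α ∈ K) ↔
      ((∀ g : G, ({g} : Set G) ∈ F) ∧
       (∀ A ∈ F, ∀ B ⊆ A, B ∈ F) ∧
       (∀ A ∈ F, ∀ B ∈ F, A ∪ B ∈ F) ∧
       (∀ A ∈ F, ∀ B ∈ F, A + B ∈ F) ∧
       (∀ A ∈ F, A ⊆ {g : G | 0 ≤ g} → (AddSubmonoid.closure A : Set G) ∈ F)) := by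
    constructor
    · rintro ⟨K, hK, hmono⟩
      have memK : ∀ a : HahnSeries G k, a ∈ K ↔ a.support ∈ F := fun a => by
        rw [← SetLike.mem_coe, hK]; exact Iff.rfl
      have hPWO : ∀ A ∈ F, A.IsPWO := fun A hA => (hWF A hA).isPWO
      have hS1 : ∀ g : G, ({g} : Set G) ∈ F := fun g => by
        have h := (memK _).1 (hmono 1 g)
        rwa [HahnSeries.support_single_of_ne one_ne_zero] at h
      have hS2 : ∀ A ∈ F, ∀ B ⊆ A, B ∈ F := by
        intro A hA B hB
        have hAp : A.IsPWO := hPWO A hA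
        have hBp : B.IsPWO := hAp.mono hB
        have h1 : KHullAux.ind k A hAp ∈ K := (memK _).2 (by
          rw [KHullAux.support_ind]; exact hA)
        have h2 : KHullAux.ind k A hAp + KHullAux.ind k B hBp ∈ K := (memK _).2 (by
          rw [KHullAux.support_ind_add_ind, Set.union_eq_self_of_subset_right hB]; exact hA)
        have h3 := K.sub_mem h2 h1
        rw [add_sub_cancel_left] at h3
        have h4 := (memK _).1 h3
        rwa [KHullAux.support_ind] at h4
      have hS3 : ∀ A ∈ F, ∀ B ∈ F, A ∪ B ∈ F := by
        intro A hA B hB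
        have hAp := hPWO A hA
        have hBp := hPWO B hB
        have h1 : KHullAux.ind k A hAp ∈ K := (memK _).2 (by
          rw [KHullAux.support_ind]; exact hA)
        have h2 : KHullAux.ind k B hBp ∈ K := (memK _).2 (by
          rw [KHullAux.support_ind]; exact hB)
        have h3 := (memK _).1 (K.add_mem h1 h2)
        rwa [KHullAux.support_ind_add_ind] at h3
      have hEmpty : (∅ : Set G) ∈ F := hS2 _ (hS1 0) _ (Set.empty_subset _)
      have hTrans : ∀ (g : G), ∀ A ∈ F, ({g} + A) ∈ F := by
        intro g A hA
        have hAp := hPWO A hA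
        have h1 : KHullAux.ind k A hAp ∈ K := (memK _).2 (by
          rw [KHullAux.support_ind]; exact hA)
        have h2 := (memK _).1 (K.mul_mem (hmono 1 g) h1)
        rwa [KHullAux.support_single_mul g one_ne_zero, KHullAux.support_ind] at h2
      have hS4 : ∀ A ∈ F, A ⊆ {g : G | 0 ≤ g} → (AddSubmonoid.closure A : Set G) ∈ F := by
        intro A hA hA0
        have hA' : A ∩ {g : G | 0 < g} ∈ F := hS2 A hA _ Set.inter_subset_left
        have hA'p := hPWO _ hA'
        obtain ⟨w, hw1, hw2⟩ := KHullAux.geomK (k := k) (A ∩ {g : G | 0 < g}) hA'p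
          (fun g hg => hg.2)
        have h1u : (1 - KHullAux.ind k _ hA'p) ∈ K := (memK _).2 <| by
          refine hS2 _ (hS3 _ (hS1 0) _ hA') _ ?_
          intro g hg
          have hg' : g ∈ ((1 : HahnSeries G k) +
              -(KHullAux.ind k _ hA'p)).support := by
            rwa [← sub_eq_add_neg]
          rcases HahnSeries.support_add_subset _ _ hg' with h | h
          · exact Or.inl ((HahnSeries.support_one (Γ := G) (R := k)) ▸ h)
          · right
            rw [HahnSeries.support_neg] at h
            have hsub : (KHullAux.ind k (A ∩ {g : G | 0 < g}) hA'p).support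
                ⊆ A ∩ {g : G | 0 < g} := by rw [KHullAux.support_ind]
            exact hsub h
        have hinv : (1 - KHullAux.ind k _ hA'p)⁻¹ = w := inv_eq_of_mul_eq_one_right hw1
        have hwK : w ∈ K := hinv ▸ K.inv_mem h1u
        have hclF : (AddSubmonoid.closure (A ∩ {g : G | 0 < g}) : Set G) ∈ F := by
          have h5 := (memK _).1 hwK
          rwa [hw2] at h5
        have hceq : AddSubmonoid.closure A = AddSubmonoid.closure (A ∩ {g : G | 0 < g}) := by
          apply le_antisymm
          · rw [AddSubmonoid.closure_le]
            intro a ha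
            rcases (hA0 ha).eq_or_lt with h | h
            · rw [← h]; exact AddSubmonoid.zero_mem _
            · exact AddSubmonoid.subset_closure ⟨ha, h⟩
          · exact AddSubmonoid.closure_mono Set.inter_subset_left
        rw [hceq]
        exact hclF
      have hS5 : ∀ A ∈ F, ∀ B ∈ F, A + B ∈ F := by
        intro A hA B hB
        rcases A.eq_empty_or_nonempty with rfl | hAne
        · simpa [Set.empty_add] using hEmpty
        rcases B.eq_empty_or_nonempty with rfl | hBne
        · simpa [Set.add_empty] using hEmpty
        set a0 := (hWF A hA).min hAne with ha0
        set b0 := (hWF B hB).min hBne with hb0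
        have hA' : ({-a0} + A) ∈ F := hTrans _ _ hA
        have hB' : ({-b0} + B) ∈ F := hTrans _ _ hB
        have hsub : ({-a0} + A) ∪ ({-b0} + B) ⊆ {g : G | 0 ≤ g} := by
          rintro g (hg | hg)
          · obtain ⟨x, hx, y, hy, rfl⟩ := Set.mem_add.1 hg
            rw [Set.mem_singleton_iff] at hx; subst hx
            have hy' : a0 ≤ y := (hWF A hA).min_le hAne hy
            simpa using add_le_add_left hy' (-a0)
          · obtain ⟨x, hx, y, hy, rfl⟩ := Set.mem_add.1 hg
            rw [Set.mem_singleton_iff] at hx; subst hx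
            have hy' : b0 ≤ y := (hWF B hB).min_le hBne hy
            simpa using add_le_add_left hy' (-b0)
        have hcl := hS4 _ (hS3 _ hA' _ hB') hsub
        have hsum : ({-a0} + A) + ({-b0} + B) ⊆
            (AddSubmonoid.closure (({-a0} + A) ∪ ({-b0} + B)) : Set G) := by
          intro g hg
          obtain ⟨x, hx, y, hy, rfl⟩ := Set.mem_add.1 hg
          exact AddSubmonoid.add_mem _ (AddSubmonoid.subset_closure (Or.inl hx))
            (AddSubmonoid.subset_closure (Or.inr hy))
        have hAB' : ({-a0} + A) + ({-b0} + B) ∈ F := hS2 _ hcl _ hsum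
        have hfin : {a0 + b0} + (({-a0} + A) + ({-b0} + B)) ∈ F := hTrans _ _ hAB'
        have e1 : ∀ (c : G) (S : Set G), ({c} : Set G) + (({-c} : Set G) + S) = S := by
          intro c S
          rw [← add_assoc, Set.singleton_add_singleton, add_neg_cancel, Set.singleton_zero,
            zero_add]
        have heq : A + B = {a0 + b0} + (({-a0} + A) + ({-b0} + B)) := by
          conv_lhs => rw [← e1 a0 A, ← e1 b0 B]
          rw [add_add_add_comm, Set.singleton_add_singleton]
        rw [heq]
        exact hfin
      exact ⟨hS1, hS2, hS3, hS5, hS4⟩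
    · rintro ⟨hS1, hS2, hS3, hA2, hA4⟩
      have hE : (∅ : Set G) ∈ F := hS2 _ (hS1 0) _ (Set.empty_subset _)
      have hinvmem : ∀ x : HahnSeries G k, x.support ∈ F → x⁻¹.support ∈ F := by
        intro x hx
        rcases eq_or_ne x 0 with rfl | hx0
        · rw [inv_zero, HahnSeries.support_zero]; exact hE
        · have hlc : x.leadingCoeff ≠ 0 := HahnSeries.leadingCoeff_ne_zero.mpr hx0
          have hr : (x.leadingCoeff)⁻¹ * x.leadingCoeff = 1 := inv_mul_cancel₀ hlc
          have hu := HahnSeries.unit_aux x hr _ (neg_add_cancel x.order)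
          set u := 1 - HahnSeries.single (-x.order) (x.leadingCoeff)⁻¹ * x with hudef
          set w := (HahnSeries.SummableFamily.powers u).hsum with hwdef
          have h1u : (1 : HahnSeries G k) - u
              = HahnSeries.single (-x.order) (x.leadingCoeff)⁻¹ * x := by
            rw [hudef, sub_sub_cancel]
          have hxw : x * (HahnSeries.single (-x.order) (x.leadingCoeff)⁻¹ * w) = 1 := by
            have h := HahnSeries.SummableFamily.one_sub_self_mul_hsum_powers hu
            calc x * (HahnSeries.single (-x.order) (x.leadingCoeff)⁻¹ * w)
                = ((1 : HahnSeries G k) - u) * w := by rw [h1u]; ring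
              _ = 1 := h
          have hinv : x⁻¹ = HahnSeries.single (-x.order) (x.leadingCoeff)⁻¹ * w :=
            inv_eq_of_mul_eq_one_right hxw
          have hsuppu : u.support ⊆ ({(0:G)} : Set G) ∪ ({-x.order} + x.support) := by
            intro g hg
            have hg' : g ∈ ((1 : HahnSeries G k) +
                -(HahnSeries.single (-x.order) (x.leadingCoeff)⁻¹ * x)).support := by
              rw [← sub_eq_add_neg]
              exact hg
            rcases HahnSeries.support_add_subset _ _ hg' with h | h
            · exact Or.inl ((HahnSeries.support_one (Γ := G) (R := k)) ▸ h)
            · right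
              rw [HahnSeries.support_neg] at h
              have h2 := HahnSeries.support_mul_subset h
              exact Set.add_subset_add HahnSeries.support_single_subset
                (Set.Subset.refl _) h2
          have huF : u.support ∈ F :=
            hS2 _ (hS3 _ (hS1 0) _ (hA2 _ (hS1 (-x.order)) _ hx)) _ hsuppu
          have hupos : u.support ⊆ {g : G | 0 ≤ g} := by
            intro g hg
            have h1 : u.orderTop ≤ (g : WithTop G) :=
              HahnSeries.orderTop_le_of_coeff_ne_zero hg
            have h2 : (0 : WithTop G) < (g : WithTop G) := lt_of_lt_of_le hu h1
            exact le_of_lt (WithTop.coe_pos.1 h2)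
          have hclo := hA4 _ huF hupos
          have hsuppw : (HahnSeries.single (-x.order) (x.leadingCoeff)⁻¹ * w).support ⊆
              {-x.order} + (AddSubmonoid.closure u.support : Set G) := by
            intro g hg
            have h1 := HahnSeries.support_mul_subset hg
            refine Set.add_subset_add HahnSeries.support_single_subset ?_ h1
            intro g' hg'
            obtain ⟨n, hn⟩ :=
              Set.mem_iUnion.1 (HahnSeries.SummableFamily.support_hsum_subset hg')
            have hn' : g' ∈ (u ^ n).support := by
              rwa [congrFun (HahnSeries.SummableFamily.coe_powers hu) n] at hn
            exact KHullAux.support_pow_subset u n hn'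
          rw [hinv]
          exact hS2 _ (hA2 _ (hS1 (-x.order)) _ hclo) _ hsuppw
      refine ⟨{ carrier := {a : HahnSeries G k | a.support ∈ F}
                zero_mem' := ?zero
                one_mem' := ?one
                add_mem' := ?add
                neg_mem' := ?neg
                mul_mem' := ?mul
                inv_mem' := ?inv }, rfl, ?mono⟩
      case zero =>
        show (0 : HahnSeries G k).support ∈ F
        rw [HahnSeries.support_zero]; exact hE
      case one =>
        show (1 : HahnSeries G k).support ∈ F
        exact hS2 _ (hS1 0) _ HahnSeries.support_one.subset
      case add =>
        intro a b ha hb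
        exact hS2 _ (hS3 _ ha _ hb) _ (HahnSeries.support_add_subset _ _)
      case neg =>
        intro a ha
        show (-a).support ∈ F
        rw [HahnSeries.support_neg]; exact ha
      case mul =>
        intro a b ha hb
        exact hS2 _ (hA2 _ ha _ hb) _ HahnSeries.support_mul_subset
      case inv =>
        intro a ha
        exact hinvmem a ha
      case mono =>
        intro α g
        exact hS2 _ (hS1 g) _ HahnSeries.support_single_subset
  exact ⟨main, fun hK A hA B hB _ => (main.1 hK).2.1 A hA B hB⟩
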